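/- Let φ : M → M' be a morphism of modules over a discrete valuation ring 𝒪 with uniformizer ϖ and residue field k. Assume M is a free 𝒪-module and M' is 𝒪-torsion free. If the induced map φ ⊗ L on the fraction field L is surjective and the induced map φ ⊗ k modulo ϖ is injective, then φ is an isomorphism. -/

import Mathlib

private lemma pow_dvd_all_eq_zero {O : Type*} [CommRing O] [IsDomain O]
    [IsDiscreteValuationRing O] {ϖ : O} (hϖ : Irreducible ϖ) {c : O}
    (h : ∀ n : ℕ, ϖ ^ n ∣ c) : c = 0 := by
  by_contra hc
  obtain ⟨n, u, rfl⟩ := IsDiscreteValuationRing.eq_unit_mul_pow_irreducible hc hϖ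
  obtain ⟨d, hd⟩ := h (n + 1)
  have hne : (ϖ : O) ^ n ≠ 0 := pow_ne_zero _ hϖ.ne_zero
  have hu : (u : O) = ϖ * d := by
    apply mul_right_cancel₀ hne
    rw [hd]; ring
  exact hϖ.not_isUnit (IsUnit.of_mul_eq_one (a := ϖ) (d * ↑u⁻¹) (by
    rw [← mul_assoc, ← hu]; simp))

/-- Let `φ : M → M'` be a morphism of modules over a DVR `𝒪` with
uniformizer `ϖ`. If `M` is free, `M'` is torsion free, `φ ⊗ L` is surjective
(every element of `M'` is hit after multiplying by a power of `ϖ`) and `φ ⊗ k` is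
injective (`φ m ∈ ϖM'` implies `m ∈ ϖM`), then `φ` is an isomorphism. -/
theorem stmt0 {O : Type*} [CommRing O] [IsDomain O] [IsDiscreteValuationRing O]
    (ϖ : O) (hϖ : Irreducible ϖ)
    {M M' : Type*} [AddCommGroup M] [Module O M] [AddCommGroup M'] [Module O M']
    [Module.Free O M]
    (htf : ∀ (c : O) (m' : M'), c • m' = 0 → c = 0 ∨ m' = 0)
    (φ : M →ₗ[O] M')
    (hL : ∀ m' : M', ∃ (m : M) (n : ℕ), ϖ ^ n • m' = φ m)
    (hk : ∀ m : M, (∃ m'' : M', φ m = ϖ • m'') → ∃ m₀ : M, m = ϖ • m₀) :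
    Function.Bijective φ := by
  have hϖ0 : ϖ ≠ 0 := hϖ.ne_zero
  constructor
  · -- injectivity
    rw [injective_iff_map_eq_zero]
    intro m hm
    have key : ∀ n : ℕ, ∃ m₀ : M, m = ϖ ^ n • m₀ ∧ φ m₀ = 0 := by
      intro n
      induction n with
      | zero => exact ⟨m, by simp, hm⟩
      | succ n ih =>
        obtain ⟨m₀, hm₀, hφ₀⟩ := ih
        obtain ⟨m₁, hm₁⟩ := hk m₀ ⟨0, by simp [hφ₀]⟩
        have hφ₁ : φ m₁ = 0 := by
          have : ϖ • φ m₁ = 0 := by rw [← map_smul, ← hm₁, hφ₀]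
          rcases htf ϖ (φ m₁) this with h | h
          · exact absurd h hϖ0
          · exact h
        exact ⟨m₁, by rw [hm₀, hm₁, pow_succ, mul_smul, smul_comm], hφ₁⟩
    let b := Module.Free.chooseBasis O M
    have : ∀ i, b.repr m i = 0 := by
      intro i
      apply pow_dvd_all_eq_zero hϖ
      intro n
      obtain ⟨m₀, hm₀, -⟩ := key n
      exact ⟨b.repr m₀ i, by rw [hm₀, map_smul]; simp [mul_comm]⟩
    rw [← (LinearEquiv.map_eq_zero_iff b.repr)]
    ext i; simp [this]
  · -- surjectivity
    intro m'
    obtain ⟨m, n, hmn⟩ := hL m'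
    clear hL
    induction n generalizing m m' with
    | zero => exact ⟨m, by simpa using hmn.symm⟩
    | succ n ih =>
      have : φ m = ϖ • (ϖ ^ n • m') := by
        rw [← hmn, pow_succ, mul_smul, smul_comm]
      obtain ⟨m₀, hm₀⟩ := hk m ⟨ϖ ^ n • m', this⟩
      have hc : ϖ • (ϖ ^ n • m' - φ m₀) = 0 := by
        rw [smul_sub, ← this, hm₀, map_smul, sub_self]
      rcases htf ϖ _ hc with h | h
      · exact absurd h hϖ0
      · exact ih m' m₀ (by rwa [sub_eq_zero] at h)
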